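/- Let κ be an infinite regular cardinal, let M ⊆ S^{κ⁺}_κ be stationary in κ⁺, and let T be a set of functions from ordinals below κ⁺ to κ⁺, ordered by proper end-extension, that contains no chain of cardinality κ⁺. Assume that for every A ⊆ M that is stationary in κ⁺ and for which no club C ⊆ κ⁺ satisfies C ∩ M ⊆ A, there exists an order-preserving function from T(S^{κ⁺}_κ \ A) to T. Then for every A ⊆ M, the set A is stationary in κ⁺ if and only if either there exists a club C ⊆ κ⁺ with C ∩ M ⊆ A, or there exists an order-preserving function from T(S^{κ⁺}_κ \ A) to T. -/

import Mathlib

open Set Cardinal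

/-- `C` is a closed unbounded subset of the ordinal `δ`. -/
def IsClubIn (δ : Ordinal.{0}) (C : Set Ordinal.{0}) : Prop :=
  C ⊆ Set.Iio δ ∧
  (∀ α < δ, ∃ β ∈ C, α < β) ∧
  (∀ α < δ, 0 < α → (∀ β < α, ∃ γ ∈ C, β < γ ∧ γ < α) → α ∈ C)

/-- `S` is stationary in `δ`: it meets every club subset of `δ`. -/
def IsStationaryIn (δ : Ordinal.{0}) (S : Set Ordinal.{0}) : Prop :=
  ∀ C, IsClubIn δ C → (S ∩ C).Nonempty

/-- The set `S^{κ⁺}_κ` of ordinals below `κ⁺` of cofinality `κ`. -/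
def SCof (κ : Cardinal.{0}) : Set Ordinal.{0} :=
  {γ | γ < (Order.succ κ).ord ∧ γ.cof = κ}

/-- `g` (a set of pairs, i.e. the graph of a function) is a function from an ordinal
below `κ⁺` to `κ⁺`. -/
def IsOrdFun (κ : Cardinal.{0}) (g : Set (Ordinal.{0} × Ordinal.{0})) : Prop :=
  ∃ d < (Order.succ κ).ord,
    (∀ x ∈ g, x.1 < d ∧ x.2 < (Order.succ κ).ord) ∧
    (∀ ξ < d, ∃! β, (ξ, β) ∈ g)

/-- The tree `T(S)`, whose nodes are (graphs of) strictly increasing functions from a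
successor ordinal below `κ⁺` into `S` that are continuous at all points of cofinality
`κ` in their domain; the tree ordering is end-extension, i.e. inclusion of graphs. -/
def TStree (κ : Cardinal.{0}) (S : Set Ordinal.{0}) :
    Set (Set (Ordinal.{0} × Ordinal.{0})) :=
  {g | ∃ d, d < (Order.succ κ).ord ∧ (∃ e, d = Order.succ e) ∧
    (∀ x ∈ g, x.1 < d) ∧ (∀ ξ < d, ∃! β, (ξ, β) ∈ g) ∧
    (∀ x ∈ g, x.2 ∈ S) ∧
    (∀ ξ β η β', (ξ, β) ∈ g → (η, β') ∈ g → ξ < η → β < β') ∧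
    (∀ ξ β, (ξ, β) ∈ g → ξ.cof = κ → β = sSup {β' | ∃ η < ξ, (η, β') ∈ g})}

/-- `f` is an order-preserving function from `T(S^{κ⁺}_κ \ A)` to `T` (both ordered by
proper end-extension, i.e. proper inclusion of graphs). -/
def OrderPresInto (κ : Cardinal.{0}) (A : Set Ordinal.{0})
    (T : Set (Set (Ordinal.{0} × Ordinal.{0})))
    (f : Set (Ordinal.{0} × Ordinal.{0}) → Set (Ordinal.{0} × Ordinal.{0})) : Prop :=
  (∀ g ∈ TStree κ (SCof κ \ A), f g ∈ T) ∧
  (∀ g ∈ TStree κ (SCof κ \ A), ∀ h ∈ TStree κ (SCof κ \ A), g ⊂ h → f g ⊂ f h)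

namespace St7

noncomputable def iterF (κ : Cardinal.{0}) (E : Set Ordinal.{0}) (α : Ordinal.{0})
    (ξ : Ordinal.{0}) : Ordinal.{0} :=
  if ξ.cof = κ then Ordinal.bsup ξ (fun η (_ : η < ξ) => iterF κ E α η)
  else sInf {γ | γ ∈ E ∧ α < γ ∧ Ordinal.bsup ξ (fun η (_ : η < ξ) => iterF κ E α η) < γ}
termination_by ξ

theorem iterF_def (κ : Cardinal.{0}) (E : Set Ordinal.{0}) (α ξ : Ordinal.{0}) :
    iterF κ E α ξ =
      if ξ.cof = κ then Ordinal.bsup ξ (fun η (_ : η < ξ) => iterF κ E α η)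
      else sInf {γ | γ ∈ E ∧ α < γ ∧
        Ordinal.bsup ξ (fun η (_ : η < ξ) => iterF κ E α η) < γ} := by
  rw [iterF]

theorem cof_bsup_eq {κ : Cardinal.{0}} (hκ : ℵ₀ ≤ κ) {ξ : Ordinal.{0}} (hξ : ξ.cof = κ)
    (t : Ordinal.{0} → Ordinal.{0}) (hmono : ∀ η ζ, ζ < ξ → η < ζ → t η < t ζ) :
    (Ordinal.bsup ξ (fun η (_ : η < ξ) => t η)).cof = κ := by
  have hlim : Order.IsSuccLimit ξ := Ordinal.aleph0_le_cof.1 (hξ ▸ hκ)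
  set s := Ordinal.bsup ξ (fun η (_ : η < ξ) => t η) with hs
  have hmono_le : ∀ η ζ, ζ < ξ → η ≤ ζ → t η ≤ t ζ := by
    intro η ζ hζ hle
    rcases hle.lt_or_eq with h | h
    · exact (hmono η ζ hζ h).le
    · rw [h]
  have hlt_s : ∀ η, η < ξ → t η < s := by
    intro η hη
    have h1 : Order.succ η < ξ := hlim.succ_lt hη
    exact (hmono η (Order.succ η) h1 (Order.lt_succ η)).trans_le
      (Ordinal.le_bsup (fun η (_ : η < ξ) => t η) _ h1)
  apply le_antisymm
  · obtain ⟨ι, f0, hl, hc⟩ := Ordinal.exists_lsub_cof ξ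
    have hlg : Ordinal.lsub (fun i => t (f0 i)) = s := by
      apply le_antisymm
      · exact Ordinal.lsub_le fun i => hlt_s (f0 i) (hl ▸ Ordinal.lt_lsub f0 i)
      · apply Ordinal.bsup_le
        intro η hη
        obtain ⟨i, hi⟩ := Ordinal.lt_lsub_iff.1 (hl ▸ hη)
        exact (hmono_le η (f0 i) (hl ▸ Ordinal.lt_lsub f0 i) hi).trans
          (Ordinal.lt_lsub (fun i => t (f0 i)) i).le
    calc s.cof ≤ #ι := hlg ▸ Ordinal.cof_lsub_le _
      _ = κ := by rw [hc, hξ]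
  · by_contra hlow
    push_neg at hlow
    obtain ⟨ι, f0, hl, hc⟩ := Ordinal.exists_lsub_cof s
    have hex : ∀ i, ∃ η, ∃ _ : η < ξ, f0 i < t η := by
      intro i
      have h1 : f0 i < s := hl ▸ Ordinal.lt_lsub f0 i
      rw [hs] at h1
      exact (Ordinal.lt_bsup (fun η (_ : η < ξ) => t η)).1 h1
    choose h hh hlt using hex
    have hsup_le : iSup h ≤ ξ := Ordinal.iSup_le fun i => (hh i).le
    rcases hsup_le.lt_or_eq with hcase | hcase
    · have : s ≤ t (iSup h) := by
        rw [← hl]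
        apply Ordinal.lsub_le
        intro i
        exact (hlt i).trans_le (hmono_le (h i) (iSup h) hcase (Ordinal.le_iSup h i))
      exact absurd this (not_le.2 (hlt_s _ hcase))
    · have : ξ.cof ≤ #ι := by
        rw [← hcase]
        exact Ordinal.cof_iSup_le fun i => hcase ▸ hh i
      rw [hξ, hc] at this
      exact absurd (this.trans_lt hlow) (lt_irrefl κ)

theorem iterF_main {κ : Cardinal.{0}} (hκ : ℵ₀ ≤ κ) {C E : Set Ordinal.{0}}
    (hC : IsClubIn (Order.succ κ).ord C) (hEC : E ⊆ C)
    (hEunb : ∀ a < (Order.succ κ).ord, ∃ γ ∈ E, a < γ) {α : Ordinal.{0}}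
    (hα : α < (Order.succ κ).ord) :
    ∀ ξ, ξ < (Order.succ κ).ord →
      iterF κ E α ξ < (Order.succ κ).ord ∧ α < iterF κ E α ξ ∧
      (∀ η < ξ, iterF κ E α η < iterF κ E α ξ) ∧ iterF κ E α ξ ∈ C ∧
      (ξ.cof = κ → (iterF κ E α ξ).cof = κ) ∧ (ξ.cof ≠ κ → iterF κ E α ξ ∈ E) := by
  intro ξ
  induction ξ using Ordinal.induction with
  | _ ξ IH =>
  intro hξΛ
  have hcofΛ : ((Order.succ κ).ord).cof = Order.succ κ := (Cardinal.isRegular_succ hκ).cof_eq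
  set s := Ordinal.bsup ξ (fun η (_ : η < ξ) => iterF κ E α η) with hs
  have hsΛ : s < (Order.succ κ).ord := by
    rw [hs]
    refine Ordinal.bsup_lt_ord ?_ fun η hη => (IH η hη (hη.trans hξΛ)).1
    rw [hcofΛ]
    exact Cardinal.lt_ord.1 hξΛ
  have hub : ∀ η, η < ξ → iterF κ E α η ≤ s := fun η hη =>
    Ordinal.le_bsup (fun η (_ : η < ξ) => iterF κ E α η) η hη
  by_cases hcof : ξ.cof = κ
  · have hval : iterF κ E α ξ = s := by rw [hs, iterF_def, if_pos hcof]
    have hξ0 : 0 < ξ := by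
      rw [pos_iff_ne_zero]
      intro h
      rw [h, Ordinal.cof_zero] at hcof
      exact (aleph0_pos.trans_le hκ).ne' hcof.symm
    have hlim : Order.IsSuccLimit ξ := Ordinal.aleph0_le_cof.1 (hcof ▸ hκ)
    have hstrict : ∀ η < ξ, iterF κ E α η < iterF κ E α ξ := by
      intro η hη
      have h2 : Order.succ η < ξ := hlim.succ_lt hη
      have h1 := (IH (Order.succ η) h2 (h2.trans hξΛ)).2.2.1 η (Order.lt_succ η)
      rw [hval]
      exact h1.trans_le (hub _ h2)
    have hαlt : α < iterF κ E α ξ :=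
      ((IH 0 hξ0 (hξ0.trans hξΛ)).2.1).trans (hstrict 0 hξ0)
    refine ⟨hval ▸ hsΛ, hαlt, hstrict, ?_, ?_, fun h => absurd hcof h⟩
    · refine hC.2.2 (iterF κ E α ξ) (hval ▸ hsΛ) ((by simp : (0 : Ordinal.{0}) ≤ α).trans_lt hαlt) ?_
      intro β hβ
      rw [hval, hs] at hβ
      obtain ⟨η, hη, hβη⟩ := (Ordinal.lt_bsup (fun η (_ : η < ξ) => iterF κ E α η)).1 hβ
      exact ⟨iterF κ E α η, (IH η hη (hη.trans hξΛ)).2.2.2.1, hβη, hstrict η hη⟩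
    · intro _
      rw [hval, hs]
      exact cof_bsup_eq hκ hcof (iterF κ E α)
        (fun η ζ hζ hηζ => (IH ζ hζ (hζ.trans hξΛ)).2.2.1 η hηζ)
  · have hne : {γ | γ ∈ E ∧ α < γ ∧ s < γ}.Nonempty := by
      obtain ⟨γ, hγE, hγ⟩ := hEunb (max α s) (max_lt hα hsΛ)
      exact ⟨γ, hγE, (le_max_left α s).trans_lt hγ, (le_max_right α s).trans_lt hγ⟩
    have hval : iterF κ E α ξ = sInf {γ | γ ∈ E ∧ α < γ ∧ s < γ} := by
      rw [hs, iterF_def, if_neg hcof]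
    have hmem := csInf_mem hne
    rw [← hval] at hmem
    obtain ⟨hE', hα', hs'⟩ := hmem
    exact ⟨hC.1 (hEC hE'), hα', fun η hη => (hub η hη).trans_lt hs', hEC hE',
      fun h => absurd h hcof, fun _ => hE'⟩

theorem club_inter {κ : Cardinal.{0}} (hκ : ℵ₀ ≤ κ) {C D : Set Ordinal.{0}}
    (hC : IsClubIn (Order.succ κ).ord C) (hD : IsClubIn (Order.succ κ).ord D) :
    IsClubIn (Order.succ κ).ord (C ∩ D) := by
  have hcofΛ : ((Order.succ κ).ord).cof = Order.succ κ := (Cardinal.isRegular_succ hκ).cof_eq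
  refine ⟨fun x hx => hC.1 hx.1, ?_, ?_⟩
  · intro α hα
    classical
    set nextC : Ordinal.{0} → Ordinal.{0} := fun β =>
      if h : β < (Order.succ κ).ord then (hC.2.1 β h).choose else 0 with hnextC
    set nextD : Ordinal.{0} → Ordinal.{0} := fun β =>
      if h : β < (Order.succ κ).ord then (hD.2.1 β h).choose else 0 with hnextD
    have hnC : ∀ β, β < (Order.succ κ).ord → nextC β ∈ C ∧ β < nextC β := by
      intro β h
      rw [hnextC]
      simp only [dif_pos h]
      exact ⟨(hC.2.1 β h).choose_spec.1, (hC.2.1 β h).choose_spec.2⟩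
    have hnD : ∀ β, β < (Order.succ κ).ord → nextD β ∈ D ∧ β < nextD β := by
      intro β h
      rw [hnextD]
      simp only [dif_pos h]
      exact ⟨(hD.2.1 β h).choose_spec.1, (hD.2.1 β h).choose_spec.2⟩
    set x : ℕ → Ordinal.{0} := fun n =>
      Nat.rec (nextC α) (fun n xn => if Even n then nextD xn else nextC xn) n with hx
    have hx0 : x 0 = nextC α := rfl
    have hxsucc : ∀ n, x (n + 1) = if Even n then nextD (x n) else nextC (x n) := fun n => rfl
    have key : ∀ n, ((Even n → x n ∈ C) ∧ (¬ Even n → x n ∈ D)) ∧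
        x n < (Order.succ κ).ord ∧ α < x n := by
      intro n
      induction n with
      | zero =>
        have h0 := hnC α hα
        rw [hx0]
        exact ⟨⟨fun _ => h0.1, fun h => absurd (Even.zero) h⟩, hC.1 h0.1, h0.2⟩
      | succ n ih =>
        rw [hxsucc]
        by_cases hev : Even n
        · rw [if_pos hev]
          have h1 := hnD (x n) ih.2.1
          refine ⟨⟨?_, fun _ => h1.1⟩, hD.1 h1.1, ih.2.2.trans h1.2⟩
          intro h2
          rw [Nat.even_add_one] at h2
          exact absurd hev h2
        · rw [if_neg hev]
          have h1 := hnC (x n) ih.2.1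
          refine ⟨⟨fun _ => h1.1, ?_⟩, hC.1 h1.1, ih.2.2.trans h1.2⟩
          intro h2
          rw [Nat.even_add_one, not_not] at h2
          exact absurd h2 hev
    have hstep : ∀ n, x n < x (n + 1) := by
      intro n
      rw [hxsucc]
      by_cases hev : Even n
      · rw [if_pos hev]; exact (hnD (x n) (key n).2.1).2
      · rw [if_neg hev]; exact (hnC (x n) (key n).2.1).2
    have hmono : StrictMono x := strictMono_nat_of_lt_succ hstep
    have hsΛ : iSup x < (Order.succ κ).ord := by
      refine Ordinal.iSup_lt_of_lt_cof ?_ fun n => (key n).2.1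
      rw [hcofΛ, Cardinal.mk_nat]
      exact hκ.trans_lt (Order.lt_succ κ)
    have hαs : α < iSup x := (key 0).2.2.trans_le (Ordinal.le_iSup x 0)
    refine ⟨iSup x, ⟨?_, ?_⟩, hαs⟩
    · refine hC.2.2 _ hsΛ ((by simp : (0 : Ordinal.{0}) ≤ α).trans_lt hαs) ?_
      intro β hβ
      obtain ⟨n, hn⟩ := Ordinal.lt_iSup_iff.1 hβ
      refine ⟨x (2 * n), (key (2 * n)).1.1 (even_two_mul n),
        hn.trans_le (hmono.monotone (show n ≤ 2 * n by omega)), ?_⟩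
      exact (hstep (2 * n)).trans_le (Ordinal.le_iSup x (2 * n + 1))
    · refine hD.2.2 _ hsΛ ((by simp : (0 : Ordinal.{0}) ≤ α).trans_lt hαs) ?_
      intro β hβ
      obtain ⟨n, hn⟩ := Ordinal.lt_iSup_iff.1 hβ
      refine ⟨x (2 * n + 1), (key (2 * n + 1)).1.2 (by simp [Nat.even_add_one]),
        hn.trans_le (hmono.monotone (show n ≤ 2 * n + 1 by omega)), ?_⟩
      exact (hstep (2 * n + 1)).trans_le (Ordinal.le_iSup x (2 * n + 2))
  · intro a haΛ ha0 happ
    exact ⟨hC.2.2 a haΛ ha0 fun β hβ =>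
        let ⟨γ, hγ, h1, h2⟩ := happ β hβ; ⟨γ, hγ.1, h1, h2⟩,
      hD.2.2 a haΛ ha0 fun β hβ =>
        let ⟨γ, hγ, h1, h2⟩ := happ β hβ; ⟨γ, hγ.2, h1, h2⟩⟩

end St7

theorem statement7 (κ : Cardinal.{0}) (hκ : ℵ₀ ≤ κ) (hreg : κ.IsRegular)
    (M : Set Ordinal.{0}) (hMsub : M ⊆ SCof κ)
    (hMstat : IsStationaryIn (Order.succ κ).ord M)
    (T : Set (Set (Ordinal.{0} × Ordinal.{0}))) (hT : ∀ g ∈ T, IsOrdFun κ g)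
    (hnochain : ¬ ∃ c ⊆ T, IsChain (· ⊆ ·) c ∧ #c = Cardinal.lift.{1} (Order.succ κ))
    (hembed : ∀ A ⊆ M, IsStationaryIn (Order.succ κ).ord A →
      ¬ (∃ C, IsClubIn (Order.succ κ).ord C ∧ C ∩ M ⊆ A) →
      ∃ f, OrderPresInto κ A T f) :
    ∀ A ⊆ M, (IsStationaryIn (Order.succ κ).ord A ↔
      ((∃ C, IsClubIn (Order.succ κ).ord C ∧ C ∩ M ⊆ A) ∨
        ∃ f, OrderPresInto κ A T f)) := by
  intro A hAM
  constructor
  · intro hstat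
    by_cases h : ∃ C, IsClubIn (Order.succ κ).ord C ∧ C ∩ M ⊆ A
    · exact Or.inl h
    · exact Or.inr (hembed A hAM hstat h)
  · rintro (⟨C, hC, hCM⟩ | ⟨f, hf1, hf2⟩)
    · intro D hD
      obtain ⟨x, hxM, hxCD⟩ := hMstat (C ∩ D) (St7.club_inter hκ hC hD)
      exact ⟨x, hCM ⟨hxCD.1, hxM⟩, hxCD.2⟩
    · -- the hard case: an order-preserving map into T forces A to be stationary
      by_contra hstat
      rw [IsStationaryIn] at hstat
      push_neg at hstat
      obtain ⟨C, hC, hCA⟩ := hstat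
      -- the set of elements of C of cofinality κ
      set D : Set Ordinal.{0} := {γ | γ ∈ C ∧ γ.cof = κ} with hD
      have hDC : D ⊆ C := fun _ h => h.1
      have hDunb : ∀ a < (Order.succ κ).ord, ∃ γ ∈ D, a < γ := by
        intro a ha
        have hko : κ.ord < (Order.succ κ).ord := Cardinal.ord_lt_ord.2 (Order.lt_succ κ)
        have h := St7.iterF_main hκ hC (subset_refl C) hC.2.1 ha κ.ord hko
        exact ⟨St7.iterF κ C a κ.ord, ⟨h.2.2.2.1, h.2.2.2.2.1 hreg.cof_eq⟩, h.2.1⟩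
      have h0Λ : (0 : Ordinal.{0}) < (Order.succ κ).ord :=
        (by simp : (0 : Ordinal.{0}) ≤ κ.ord).trans_lt (Cardinal.ord_lt_ord.2 (Order.lt_succ κ))
      set t : Ordinal.{0} → Ordinal.{0} := St7.iterF κ D 0 with ht
      have hmain := St7.iterF_main hκ hC hDC hDunb h0Λ
      have htmem : ∀ ξ, ξ < (Order.succ κ).ord → t ξ ∈ SCof κ \ A := by
        intro ξ hξ
        have hm := hmain ξ hξ
        have hcof : (t ξ).cof = κ := by
          by_cases h : ξ.cof = κ
          · exact hm.2.2.2.2.1 h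
          · exact (hm.2.2.2.2.2 h).2
        refine ⟨⟨hm.1, hcof⟩, fun hA => ?_⟩
        exact (Set.eq_empty_iff_forall_notMem.1 hCA (t ξ)) ⟨hA, hm.2.2.2.1⟩
      have htstrict : ∀ η ξ, ξ < (Order.succ κ).ord → η < ξ → t η < t ξ :=
        fun η ξ hξ hη => (hmain ξ hξ).2.2.1 η hη
      have htcont : ∀ ξ, ξ.cof = κ → t ξ = sSup (t '' Set.Iio ξ) := by
        intro ξ hcof
        have h1 : t ξ = Ordinal.bsup ξ (fun η (_ : η < ξ) => t η) := by
          rw [ht, St7.iterF_def, if_pos hcof]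
        have h2 : Ordinal.brange ξ (fun η (_ : η < ξ) => t η) = t '' Set.Iio ξ := by
          ext b
          constructor
          · rintro ⟨i, hi, rfl⟩
            exact ⟨i, hi, rfl⟩
          · rintro ⟨i, hi, rfl⟩
            exact ⟨i, hi, rfl⟩
        rw [h1, ← Ordinal.sSup_eq_bsup, h2]
      -- the nodes of the chain
      set gnode : Ordinal.{0} → Set (Ordinal.{0} × Ordinal.{0}) := fun a =>
        {p | p.1 ≤ a ∧ p.2 = t p.1} with hgnode
      have hΛlim : Order.IsSuccLimit ((Order.succ κ).ord) :=
        Cardinal.isSuccLimit_ord (hκ.trans (Order.le_succ κ))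
      have hnode : ∀ a, a < (Order.succ κ).ord → gnode a ∈ TStree κ (SCof κ \ A) := by
        intro a ha
        refine ⟨Order.succ a, hΛlim.succ_lt ha, ⟨a, rfl⟩, ?_, ?_, ?_, ?_, ?_⟩
        · exact fun p hp => Order.lt_succ_iff.2 hp.1
        · intro ξ hξ
          exact ⟨t ξ, ⟨Order.lt_succ_iff.1 hξ, rfl⟩, fun b hb => hb.2⟩
        · intro p hp
          rw [hp.2]
          exact htmem p.1 ((Order.lt_succ_iff.1 ((Order.lt_succ_iff.2 hp.1))).trans_lt ha)
        · intro ξ β η β' h1 h2 hlt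
          have e1 : β = t ξ := h1.2
          have e2 : β' = t η := h2.2
          rw [e1, e2]
          exact htstrict ξ η ((h2.1 : η ≤ a).trans_lt ha) hlt
        · intro ξ β hmem hcof
          have hset : {β' | ∃ η < ξ, (η, β') ∈ gnode a} = t '' Set.Iio ξ := by
            ext b
            constructor
            · rintro ⟨η, hη, _, he⟩
              exact ⟨η, hη, he.symm⟩
            · rintro ⟨η, hη, rfl⟩
              exact ⟨η, hη, hη.le.trans hmem.1, rfl⟩
          have e1 : β = t ξ := hmem.2
          rw [e1, hset]
          exact htcont ξ hcof
      have hproper : ∀ a b, a < b → b < (Order.succ κ).ord → gnode a ⊂ gnode b := by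
        intro a b hab hb
        rw [Set.ssubset_def]
        constructor
        · exact fun p hp => ⟨hp.1.trans hab.le, hp.2⟩
        · intro hba
          have hb2 : ((b, t b) : Ordinal.{0} × Ordinal.{0}) ∈ gnode b := ⟨le_refl b, rfl⟩
          exact absurd (hba hb2).1 (not_le.2 hab)
      set cset : Set (Set (Ordinal.{0} × Ordinal.{0})) :=
        (fun a => f (gnode a)) '' Set.Iio (Order.succ κ).ord with hcset
      refine hnochain ⟨cset, ?_, ?_, ?_⟩
      · rintro _ ⟨a, ha, rfl⟩
        exact hf1 _ (hnode a ha)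
      · rintro _ ⟨a, ha, rfl⟩ _ ⟨b, hb, rfl⟩ hne
        rcases lt_trichotomy a b with h | h | h
        · exact Or.inl (hf2 _ (hnode a ha) _ (hnode b hb) (hproper a b h hb)).subset
        · exact absurd (by rw [h]) hne
        · exact Or.inr (hf2 _ (hnode b hb) _ (hnode a ha) (hproper b a h ha)).subset
      · have hinj : Set.InjOn (fun a => f (gnode a)) (Set.Iio (Order.succ κ).ord) := by
          intro a ha b hb he
          by_contra hne
          rcases Ne.lt_or_gt hne with h | h
          · exact (hf2 _ (hnode a ha) _ (hnode b hb) (hproper a b h hb)).ne he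
          · exact (hf2 _ (hnode b hb) _ (hnode a ha) (hproper b a h ha)).ne he.symm
        rw [hcset, Cardinal.mk_image_eq_of_injOn _ _ hinj, Ordinal.mk_Iio_ordinal,
          Cardinal.card_ord]
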